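/- If φ : [0,1] → [0,∞] is continuous, strictly decreasing, convex, with φ(1) = 0, then C(u,v) = φ^{[-1]}(φ(u) + φ(v)) is a copula, where φ^{[-1]} is the pseudo-inverse of φ (equal to φ^{-1} on [0, φ(0)] and 0 beyond). -/

import Mathlib

open ENNReal

/-- A bivariate copula: a grounded, 2-increasing function on [0,1]²
with uniform margins. -/
structure Copula where
  toFun : ℝ → ℝ → ℝ
  grounded_left : ∀ v ∈ Set.Icc (0:ℝ) 1, toFun 0 v = 0
  grounded_right : ∀ u ∈ Set.Icc (0:ℝ) 1, toFun u 0 = 0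
  margin_left : ∀ u ∈ Set.Icc (0:ℝ) 1, toFun u 1 = u
  margin_right : ∀ v ∈ Set.Icc (0:ℝ) 1, toFun 1 v = v
  twoIncreasing : ∀ u₁ u₂ v₁ v₂ : ℝ, 0 ≤ u₁ → u₁ ≤ u₂ → u₂ ≤ 1 →
    0 ≤ v₁ → v₁ ≤ v₂ → v₂ ≤ 1 →
    0 ≤ toFun u₂ v₂ - toFun u₁ v₂ - toFun u₂ v₁ + toFun u₁ v₁

/-- Pseudo-inverse of a generator φ : [0,1] → [0,∞]:
φ^{[-1]}(t) = sup{x ∈ [0,1] : t ≤ φ(x)} (which is φ⁻¹(t) on [0,φ(0)] and 0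
for t ≥ φ(0)). -/
noncomputable def generatorPseudoInverse (φ : ℝ → ℝ≥0∞) (t : ℝ≥0∞) : ℝ :=
  sSup {x : ℝ | x ∈ Set.Icc (0:ℝ) 1 ∧ t ≤ φ x}

open Set in
section

section
variable {φ : ℝ → ℝ≥0∞}

lemma psi_nonneg (t : ℝ≥0∞) : 0 ≤ generatorPseudoInverse φ t :=
  Real.sSup_nonneg (fun _ hx => hx.1.1)

lemma psi_le_one (t : ℝ≥0∞) : generatorPseudoInverse φ t ≤ 1 :=
  Real.sSup_le (fun _ hx => hx.1.2) zero_le_one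

lemma psi_mem (t : ℝ≥0∞) : generatorPseudoInverse φ t ∈ Icc (0:ℝ) 1 := ⟨psi_nonneg t, psi_le_one t⟩

lemma psi_anti {t t' : ℝ≥0∞} (h : t ≤ t') : generatorPseudoInverse φ t' ≤ generatorPseudoInverse φ t :=
  Real.sSup_le (fun x hx => le_csSup ⟨1, fun _ hy => hy.1.2⟩ ⟨hx.1, h.trans hx.2⟩)
    (psi_nonneg t)

lemma psi_phi (hanti : StrictAntiOn φ (Icc 0 1)) {u : ℝ} (hu : u ∈ Icc (0:ℝ) 1) :
    generatorPseudoInverse φ (φ u) = u := by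
  have hset : {x : ℝ | x ∈ Icc (0:ℝ) 1 ∧ φ u ≤ φ x} = Icc 0 u := by
    ext x
    constructor
    · rintro ⟨hx, hle⟩
      refine ⟨hx.1, ?_⟩
      by_contra h
      push_neg at h
      exact absurd hle (not_le.mpr (hanti hu hx h))
    · rintro ⟨h0, hxu⟩
      exact ⟨⟨h0, hxu.trans hu.2⟩, hanti.antitoneOn ⟨h0, hxu.trans hu.2⟩ hu hxu⟩
  rw [generatorPseudoInverse, hset, csSup_Icc hu.1]

lemma psi_eq_zero (hanti : StrictAntiOn φ (Icc 0 1)) {t : ℝ≥0∞} (h : φ 0 ≤ t) :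
    generatorPseudoInverse φ t = 0 :=
  le_antisymm ((psi_anti h).trans_eq (psi_phi hanti ⟨le_rfl, zero_le_one⟩)) (psi_nonneg t)

lemma phi_psi (hcont : ContinuousOn φ (Icc 0 1)) (hanti : StrictAntiOn φ (Icc 0 1))
    (hφ1 : φ 1 = 0) (t : ℝ≥0∞) : φ (generatorPseudoInverse φ t) = min t (φ 0) := by
  rcases le_total t (φ 0) with h | h
  · obtain ⟨x, hx, hfx⟩ := intermediate_value_Icc' zero_le_one hcont
      (show t ∈ Icc (φ 1) (φ 0) from ⟨by simp [hφ1], h⟩)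
    rw [← hfx, psi_phi hanti hx, hfx, min_eq_left h]
  · rw [psi_eq_zero hanti h, min_eq_right h]

end
section
variable {φ : ℝ → ℝ≥0∞}

lemma psi_conv (hcont : ContinuousOn φ (Icc 0 1)) (hanti : StrictAntiOn φ (Icc 0 1))
    (hconvex : ∀ x ∈ Set.Icc (0:ℝ) 1, ∀ y ∈ Set.Icc (0:ℝ) 1,
      ∀ a b : NNReal, a + b = 1 →
        φ ((a : ℝ) * x + (b : ℝ) * y) ≤ (a : ℝ≥0∞) * φ x + (b : ℝ≥0∞) * φ y)
    (hφ1 : φ 1 = 0) (a b : NNReal) (hab : a + b = 1) (t1 t2 : ℝ≥0∞) :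
    generatorPseudoInverse φ ((a : ℝ≥0∞) * t1 + (b : ℝ≥0∞) * t2) ≤ (a : ℝ) * generatorPseudoInverse φ t1 + (b : ℝ) * generatorPseudoInverse φ t2 := by
  set x := generatorPseudoInverse φ t1 with hxdef
  set y := generatorPseudoInverse φ t2 with hydef
  have hx : x ∈ Icc (0:ℝ) 1 := psi_mem t1
  have hy : y ∈ Icc (0:ℝ) 1 := psi_mem t2
  have habr : (a : ℝ) + (b : ℝ) = 1 := by exact_mod_cast congrArg (fun z : NNReal => (z:ℝ)) hab
  have hz : (a : ℝ) * x + (b : ℝ) * y ∈ Icc (0:ℝ) 1 := by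
    constructor
    · exact add_nonneg (mul_nonneg a.coe_nonneg hx.1) (mul_nonneg b.coe_nonneg hy.1)
    · calc (a:ℝ) * x + (b:ℝ) * y ≤ (a:ℝ) * 1 + (b:ℝ) * 1 := by
            gcongr <;> [exact hx.2; exact hy.2]
        _ = 1 := by linarith
  have h1 := hconvex x hx y hy a b hab
  have h2 : (a : ℝ≥0∞) * φ x + (b : ℝ≥0∞) * φ y ≤ (a : ℝ≥0∞) * t1 + (b : ℝ≥0∞) * t2 := by
    rw [phi_psi hcont hanti hφ1, phi_psi hcont hanti hφ1]
    gcongr <;> exact min_le_left _ _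
  have h3 : φ ((a : ℝ) * x + (b : ℝ) * y) ≤ (a : ℝ≥0∞) * t1 + (b : ℝ≥0∞) * t2 := h1.trans h2
  calc generatorPseudoInverse φ ((a : ℝ≥0∞) * t1 + (b : ℝ≥0∞) * t2)
      ≤ generatorPseudoInverse φ (φ ((a : ℝ) * x + (b : ℝ) * y)) := psi_anti h3
    _ = (a : ℝ) * x + (b : ℝ) * y := psi_phi hanti hz

lemma four_point (hcont : ContinuousOn φ (Icc 0 1)) (hanti : StrictAntiOn φ (Icc 0 1))
    (hconvex : ∀ x ∈ Set.Icc (0:ℝ) 1, ∀ y ∈ Set.Icc (0:ℝ) 1,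
      ∀ a b : NNReal, a + b = 1 →
        φ ((a : ℝ) * x + (b : ℝ) * y) ≤ (a : ℝ≥0∞) * φ x + (b : ℝ≥0∞) * φ y)
    (hφ1 : φ 1 = 0) (p q w : ℝ≥0∞) (hpq : p ≤ q) :
    generatorPseudoInverse φ (p + w) + generatorPseudoInverse φ q ≤ generatorPseudoInverse φ p + generatorPseudoInverse φ (q + w) := by
  by_cases hq : q = ∞
  · subst hq
    rw [top_add]
    exact add_le_add_left (psi_anti le_self_add) _
  by_cases hw : w = ∞
  · subst hw
    rw [add_top, add_top, add_comm]
    exact add_le_add_left (psi_anti hpq) _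
  by_cases hw0 : w = 0
  · subst hw0
    rw [add_zero, add_zero, add_comm]
  rcases eq_or_lt_of_le hpq with rfl | hplt
  · rw [add_comm]
  have hp : p ≠ ∞ := (hplt.trans_le le_top).ne
  -- real values
  set P := p.toReal with hP
  set Q := q.toReal with hQ
  set W := w.toReal with hW
  have hPQ : P < Q := ENNReal.toReal_lt_toReal hp hq |>.mpr hplt
  have hWpos : 0 < W := ENNReal.toReal_pos hw0 hw
  have hD : 0 < Q + W - P := by linarith
  set A := W / (Q + W - P) with hA
  have hA0 : 0 ≤ A := le_of_lt (div_pos hWpos hD)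
  have hA1 : A ≤ 1 := by
    rw [div_le_one hD]; linarith
  set a : NNReal := Real.toNNReal A with ha
  have hacoe : (a : ℝ) = A := Real.coe_toNNReal A hA0
  have ha1 : a ≤ 1 := by
    rw [← Real.toNNReal_one]
    exact Real.toNNReal_mono hA1
  set b : NNReal := 1 - a with hb
  have hab : a + b = 1 := add_tsub_cancel_of_le ha1
  have hbcoe : (b : ℝ) = 1 - A := by
    rw [hb, NNReal.coe_sub ha1, NNReal.coe_one, hacoe]
  -- key ENNReal identities
  have hfin1 : (a : ℝ≥0∞) * p + (b : ℝ≥0∞) * (q + w) ≠ ∞ := by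
    finiteness
  have hfin2 : (b : ℝ≥0∞) * p + (a : ℝ≥0∞) * (q + w) ≠ ∞ := by
    finiteness
  have hAD : A * (Q + W - P) = W := div_mul_cancel₀ W hD.ne'
  have key1 : (a : ℝ≥0∞) * p + (b : ℝ≥0∞) * (q + w) = q := by
    rw [← ENNReal.toReal_eq_toReal_iff' hfin1 hq]
    rw [ENNReal.toReal_add (by finiteness) (by finiteness), ENNReal.toReal_mul,
      ENNReal.toReal_mul, ENNReal.toReal_add hq hw, ENNReal.coe_toReal, ENNReal.coe_toReal]
    rw [hacoe, hbcoe, ← hP, ← hQ, ← hW]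
    nlinarith [hAD]
  have key2 : (b : ℝ≥0∞) * p + (a : ℝ≥0∞) * (q + w) = p + w := by
    rw [← ENNReal.toReal_eq_toReal_iff' hfin2 (by finiteness)]
    rw [ENNReal.toReal_add (by finiteness) (by finiteness), ENNReal.toReal_mul,
      ENNReal.toReal_mul, ENNReal.toReal_add hq hw, ENNReal.toReal_add hp hw,
      ENNReal.coe_toReal, ENNReal.coe_toReal]
    rw [hacoe, hbcoe, ← hP, ← hQ, ← hW]
    nlinarith [hAD]
  have c1 := psi_conv hcont hanti hconvex hφ1 a b hab p (q + w)
  have c2 := psi_conv hcont hanti hconvex hφ1 b a (by rw [add_comm]; exact hab) p (q + w)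
  rw [key1] at c1
  rw [key2] at c2
  have habr : (a : ℝ) + (b : ℝ) = 1 := by exact_mod_cast congrArg (fun z : NNReal => (z:ℝ)) hab
  have e1 : (a:ℝ) * generatorPseudoInverse φ p + (b:ℝ) * generatorPseudoInverse φ p = generatorPseudoInverse φ p := by rw [← add_mul, habr, one_mul]
  have e2 : (a:ℝ) * generatorPseudoInverse φ (q + w) + (b:ℝ) * generatorPseudoInverse φ (q + w) = generatorPseudoInverse φ (q + w) := by
    rw [← add_mul, habr, one_mul]
  linarith

end
section
variable {φ : ℝ → ℝ≥0∞}

lemma claimA (hcont : ContinuousOn φ (Icc 0 1)) (hanti : StrictAntiOn φ (Icc 0 1))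
    (hφ1 : φ 1 = 0) (m s : ℝ≥0∞) :
    generatorPseudoInverse φ (φ (generatorPseudoInverse φ m) + s) = generatorPseudoInverse φ (m + s) := by
  rw [phi_psi hcont hanti hφ1]
  rcases le_total m (φ 0) with h | h
  · rw [min_eq_left h]
  · rw [min_eq_right h, psi_eq_zero hanti le_self_add,
      psi_eq_zero hanti (h.trans le_self_add)]

lemma lipschitz (hcont : ContinuousOn φ (Icc 0 1)) (hanti : StrictAntiOn φ (Icc 0 1))
    (hconvex : ∀ x ∈ Set.Icc (0:ℝ) 1, ∀ y ∈ Set.Icc (0:ℝ) 1,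
      ∀ a b : NNReal, a + b = 1 →
        φ ((a : ℝ) * x + (b : ℝ) * y) ≤ (a : ℝ≥0∞) * φ x + (b : ℝ≥0∞) * φ y)
    (hφ1 : φ 1 = 0) {a b : ℝ} (ha : a ∈ Icc (0:ℝ) 1) (hb : b ∈ Icc (0:ℝ) 1)
    (hab : a ≤ b) (w : ℝ≥0∞) :
    generatorPseudoInverse φ (φ b + w) - generatorPseudoInverse φ (φ a + w) ≤ b - a := by
  have hfp : φ b ≤ φ a := hanti.antitoneOn ha hb hab
  have h4 := four_point hcont hanti hconvex hφ1 (φ b) (φ a) w hfp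
  rw [psi_phi hanti ha, psi_phi hanti hb] at h4
  linarith

end

/-- if φ : [0,1] → [0,∞] is continuous, strictly decreasing,
convex, with φ(1) = 0, then C(u,v) = φ^{[-1]}(φ(u) + φ(v)) is a copula. -/
theorem archimedean_construction_is_copula
    (φ : ℝ → ℝ≥0∞)
    (hcont : ContinuousOn φ (Set.Icc (0:ℝ) 1))
    (hanti : StrictAntiOn φ (Set.Icc (0:ℝ) 1))
    (hconvex : ∀ x ∈ Set.Icc (0:ℝ) 1, ∀ y ∈ Set.Icc (0:ℝ) 1,
      ∀ a b : NNReal, a + b = 1 →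
        φ ((a : ℝ) * x + (b : ℝ) * y) ≤ (a : ℝ≥0∞) * φ x + (b : ℝ≥0∞) * φ y)
    (hφ1 : φ 1 = 0) :
    ∃ C : Copula, ∀ u ∈ Set.Icc (0:ℝ) 1, ∀ v ∈ Set.Icc (0:ℝ) 1,
      C.toFun u v = generatorPseudoInverse φ (φ u + φ v) := by
  refine ⟨⟨fun u v => generatorPseudoInverse φ (φ u + φ v), ?_, ?_, ?_, ?_, ?_⟩,
    fun u _ v _ => rfl⟩
  · -- grounded_left
    intro v _
    exact psi_eq_zero hanti le_self_add
  · -- grounded_right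
    intro u _
    exact psi_eq_zero hanti le_add_self
  · -- margin_left
    intro u hu
    show generatorPseudoInverse φ (φ u + φ 1) = u
    rw [hφ1, add_zero, psi_phi hanti hu]
  · -- margin_right
    intro v hv
    show generatorPseudoInverse φ (φ 1 + φ v) = v
    rw [hφ1, zero_add, psi_phi hanti hv]
  · -- 2-increasing
    intro u₁ u₂ v₁ v₂ h1 h2 h3 h4 h5 h6
    have hu1 : u₁ ∈ Set.Icc (0:ℝ) 1 := ⟨h1, h2.trans h3⟩
    have hu2 : u₂ ∈ Set.Icc (0:ℝ) 1 := ⟨h1.trans h2, h3⟩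
    have hv1 : v₁ ∈ Set.Icc (0:ℝ) 1 := ⟨h4, h5.trans h6⟩
    have hv2 : v₂ ∈ Set.Icc (0:ℝ) 1 := ⟨h4.trans h5, h6⟩
    set s := φ v₁ - φ v₂ with hs
    have hvle : φ v₂ ≤ φ v₁ := hanti.antitoneOn hv1 hv2 h5
    have hsv : φ v₂ + s = φ v₁ := by
      rw [hs, add_comm]; exact tsub_add_cancel_of_le hvle
    set a := generatorPseudoInverse φ (φ u₁ + φ v₂) with hadef
    set b := generatorPseudoInverse φ (φ u₂ + φ v₂) with hbdef
    have hule : φ u₂ ≤ φ u₁ := hanti.antitoneOn hu1 hu2 h2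
    have hab : a ≤ b := psi_anti (add_le_add_left hule _)
    have hA1 : generatorPseudoInverse φ (φ b + s)
        = generatorPseudoInverse φ (φ u₂ + φ v₁) := by
      rw [hbdef, claimA hcont hanti hφ1, add_assoc, hsv]
    have hA2 : generatorPseudoInverse φ (φ a + s)
        = generatorPseudoInverse φ (φ u₁ + φ v₁) := by
      rw [hadef, claimA hcont hanti hφ1, add_assoc, hsv]
    have hlip := lipschitz hcont hanti hconvex hφ1 (psi_mem _) (psi_mem _) hab s
    rw [hA1, hA2] at hlip
    linarith
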